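/- For every x ∈ (0,1), φ(πx) = (log 2)/(πx) − (1/π)·∫₀^∞ (log(cosh(x·y)) / x) · (1/sinh²(y)) dy; in particular the integral on the right-hand side converges. (Equivalently, the function φ̃(x) := φ(πx) − (log 2)/(πx) satisfies φ̃(x) = −(1/π)·∫₀^∞ (log(cosh(x·y))/x)·csch²(y) dy.) -/

import Mathlib

open Real Set MeasureTheory Filter

/-- `φ(θ) = ∫₀^∞ sinh((π−θ)ξ) / (sinh(πξ)·cosh(θξ)) dξ`. -/
noncomputable def phi (θ : ℝ) : ℝ :=
  ∫ ξ in Ioi (0:ℝ), Real.sinh ((π - θ) * ξ) / (Real.sinh (π * ξ) * Real.cosh (θ * ξ))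

/-- Exponential form of `cosh`. -/
lemma aux_cosh_exp (t : ℝ) :
    Real.cosh t = Real.exp t * (1 + Real.exp (-(2 * t))) / 2 := by
  have h2 : Real.exp t * Real.exp (-(2 * t)) = Real.exp (-t) := by
    rw [← Real.exp_add]; congr 1; ring
  rw [Real.cosh_eq, mul_add, mul_one, h2]

/-- Exponential form of `sinh`. -/
lemma aux_sinh_exp (t : ℝ) :
    Real.sinh t = Real.exp t * (1 - Real.exp (-(2 * t))) / 2 := by
  have h2 : Real.exp t * Real.exp (-(2 * t)) = Real.exp (-t) := by
    rw [← Real.exp_add]; congr 1; ring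
  rw [Real.sinh_eq, mul_sub, mul_one, h2]

/-- `log (cosh t) = t + log (1 + e^{-2t}) - log 2`. -/
lemma aux_log_cosh (t : ℝ) :
    Real.log (Real.cosh t) = t + Real.log (1 + Real.exp (-(2 * t))) - Real.log 2 := by
  rw [aux_cosh_exp t, Real.log_div (by positivity) two_ne_zero,
    Real.log_mul (Real.exp_ne_zero t) (by positivity), Real.log_exp]

/-- key derivative: `d/dy [y - coth y * log(cosh(xy))/x] = F y + g y`. -/
lemma aux_hasDerivAt (x : ℝ) (hx0 : 0 < x) {y : ℝ} (hy : 0 < y) :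
    HasDerivAt (fun y => y - Real.cosh y / Real.sinh y * (Real.log (Real.cosh (x * y)) / x))
      ((Real.log (Real.cosh (x * y)) / x) * (1 / (Real.sinh y) ^ 2) +
        Real.sinh ((1 - x) * y) / (Real.sinh y * Real.cosh (x * y))) y := by
  have hxne : x ≠ 0 := ne_of_gt hx0
  have hs : Real.sinh y ≠ 0 := ne_of_gt (Real.sinh_pos_iff.mpr hy)
  have hc : Real.cosh (x * y) ≠ 0 := ne_of_gt (Real.cosh_pos _)
  have h1 : HasDerivAt (fun y => Real.cosh y / Real.sinh y)
      (-(1 / (Real.sinh y) ^ 2)) y := by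
    have h := (Real.hasDerivAt_cosh y).div (Real.hasDerivAt_sinh y) hs
    refine h.congr_deriv ?_
    have hsq := Real.cosh_sq_sub_sinh_sq y
    have hnum : Real.sinh y * Real.sinh y - Real.cosh y * Real.cosh y = -1 := by nlinarith
    rw [hnum, neg_div, one_div]
  have hxd : HasDerivAt (fun y : ℝ => x * y) x y := by
    simpa using (hasDerivAt_id y).const_mul x
  have h2 : HasDerivAt (fun y => Real.log (Real.cosh (x * y)) / x)
      (Real.sinh (x * y) / Real.cosh (x * y)) y := by
    have hcosh : HasDerivAt (fun y => Real.cosh (x * y)) (Real.sinh (x * y) * x) y :=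
      (Real.hasDerivAt_cosh (x * y)).comp y hxd
    have hlog := (hcosh.log hc).div_const x
    refine hlog.congr_deriv ?_
    field_simp
  have h := (hasDerivAt_id y).sub (h1.mul h2)
  refine h.congr_deriv ?_
  rw [show (1 - x) * y = y - x * y by ring, Real.sinh_sub]
  field_simp
  ring

/-- Limit of `G` at `0⁺` is `0`. -/
lemma aux_tendsto_zero (x : ℝ) (hx0 : 0 < x) :
    Tendsto (fun y => y - Real.cosh y / Real.sinh y * (Real.log (Real.cosh (x * y)) / x))
      (nhdsWithin 0 (Ioi 0)) (nhds 0) := by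
  have hxne : x ≠ 0 := ne_of_gt hx0
  have hslope_sinh : Tendsto (fun y : ℝ => Real.sinh y / y) (nhdsWithin 0 {(0:ℝ)}ᶜ) (nhds 1) := by
    have h := Real.hasDerivAt_sinh 0
    rw [hasDerivAt_iff_tendsto_slope] at h
    simpa [slope_fun_def, Real.sinh_zero, Real.cosh_zero, div_eq_inv_mul] using h
  have hslope_log : Tendsto (fun t : ℝ => Real.log (Real.cosh t) / t)
      (nhdsWithin 0 {(0:ℝ)}ᶜ) (nhds 0) := by
    have h0 : HasDerivAt (fun t : ℝ => Real.log (Real.cosh t)) (Real.sinh 0 / Real.cosh 0) 0 :=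
      (Real.hasDerivAt_cosh 0).log (by simp)
    rw [hasDerivAt_iff_tendsto_slope] at h0
    simpa [slope_fun_def, Real.cosh_zero, Real.sinh_zero, Real.log_one, div_eq_inv_mul] using h0
  have hmono : nhdsWithin (0:ℝ) (Ioi 0) ≤ nhdsWithin 0 {(0:ℝ)}ᶜ :=
    nhdsWithin_mono 0 (fun y hy => by simpa using ne_of_gt hy)
  have hmap : Tendsto (fun y : ℝ => x * y) (nhdsWithin 0 (Ioi 0)) (nhdsWithin 0 {(0:ℝ)}ᶜ) := by
    rw [tendsto_nhdsWithin_iff]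
    constructor
    · have h : Tendsto (fun y : ℝ => x * y) (nhds 0) (nhds (x * 0)) :=
        ((continuous_const (y := x)).mul continuous_id).tendsto (0:ℝ)
      simpa using h.mono_left nhdsWithin_le_nhds
    · filter_upwards [self_mem_nhdsWithin] with y hy
      simpa using ne_of_gt (mul_pos hx0 hy)
  have hL2 : Tendsto (fun y : ℝ => Real.log (Real.cosh (x * y)) / (x * y))
      (nhdsWithin 0 (Ioi 0)) (nhds 0) := hslope_log.comp hmap
  have hys : Tendsto (fun y : ℝ => y / Real.sinh y) (nhdsWithin 0 (Ioi 0)) (nhds 1) := by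
    have h := ((hslope_sinh.mono_left hmono).inv₀ one_ne_zero)
    simpa [inv_div] using h
  have hcosh : Tendsto (fun y : ℝ => Real.cosh y) (nhdsWithin 0 (Ioi 0)) (nhds 1) := by
    have h := Real.continuous_cosh.tendsto (0:ℝ)
    simpa using h.mono_left nhdsWithin_le_nhds
  have hid : Tendsto (fun y : ℝ => y) (nhdsWithin 0 (Ioi 0)) (nhds 0) :=
    (continuous_id.tendsto (0:ℝ)).mono_left nhdsWithin_le_nhds
  have key : Tendsto (fun y => y - Real.cosh y * (Real.log (Real.cosh (x * y)) / (x * y))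
      * (y / Real.sinh y)) (nhdsWithin 0 (Ioi 0)) (nhds 0) := by
    have h := hid.sub (((hcosh.mul hL2)).mul hys)
    simpa using h
  have heq : (fun y => y - Real.cosh y * (Real.log (Real.cosh (x * y)) / (x * y))
      * (y / Real.sinh y)) =ᶠ[nhdsWithin (0:ℝ) (Ioi 0)]
      (fun y => y - Real.cosh y / Real.sinh y * (Real.log (Real.cosh (x * y)) / x)) := by
    filter_upwards [self_mem_nhdsWithin] with y hy
    have hyne : y ≠ 0 := ne_of_gt hy
    have hs : Real.sinh y ≠ 0 := ne_of_gt (Real.sinh_pos_iff.mpr hy)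
    field_simp
  exact key.congr' heq

/-- Limit of `G` at `+∞` is `log 2 / x`. -/
lemma aux_tendsto_top (x : ℝ) (hx0 : 0 < x) :
    Tendsto (fun y => y - Real.cosh y / Real.sinh y * (Real.log (Real.cosh (x * y)) / x))
      atTop (nhds (Real.log 2 / x)) := by
  have hxne : x ≠ 0 := ne_of_gt hx0
  -- basic exponential limits
  have e2 : Tendsto (fun y : ℝ => Real.exp (-(2 * y))) atTop (nhds 0) := by
    have h2 : Tendsto (fun y : ℝ => 2 * y) atTop atTop :=
      Tendsto.const_mul_atTop two_pos tendsto_id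
    exact Real.tendsto_exp_neg_atTop_nhds_zero.comp h2
  have ex : Tendsto (fun y : ℝ => Real.exp (-(2 * (x * y)))) atTop (nhds 0) := by
    have hxy : Tendsto (fun y : ℝ => x * y) atTop atTop :=
      Tendsto.const_mul_atTop hx0 tendsto_id
    have h2 : Tendsto (fun y : ℝ => 2 * (x * y)) atTop atTop :=
      Tendsto.const_mul_atTop two_pos hxy
    exact Real.tendsto_exp_neg_atTop_nhds_zero.comp h2
  have ye2 : Tendsto (fun y : ℝ => y * Real.exp (-(2 * y))) atTop (nhds 0) := by
    have h1 : Tendsto (fun y : ℝ => y * Real.exp (-y)) atTop (nhds 0) := by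
      simpa using Real.tendsto_pow_mul_exp_neg_atTop_nhds_zero 1
    have h := h1.mul Real.tendsto_exp_neg_atTop_nhds_zero
    rw [mul_zero] at h
    apply h.congr
    intro y
    rw [mul_assoc, ← Real.exp_add]
    congr 2
    ring
  -- limit of the log term
  have hlogterm : Tendsto (fun y : ℝ => Real.log (1 + Real.exp (-(2 * (x * y)))))
      atTop (nhds 0) := by
    have hcont : ContinuousAt Real.log 1 := Real.continuousAt_log one_ne_zero
    have h0 : Tendsto (fun y : ℝ => 1 + Real.exp (-(2 * (x * y)))) atTop (nhds ((1:ℝ) + 0)) :=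
      tendsto_const_nhds.add ex
    rw [add_zero] at h0
    have h := hcont.tendsto.comp h0
    rw [Real.log_one] at h
    exact h
  -- the three pieces
  have hA : Tendsto (fun y : ℝ => (Real.log 2 - Real.log (1 + Real.exp (-(2 * (x * y))))) / x)
      atTop (nhds (Real.log 2 / x)) := by
    have h := ((tendsto_const_nhds (x := Real.log 2)).sub hlogterm).div_const x
    simpa using h
  have hr : Tendsto (fun y : ℝ => 2 * Real.exp (-(2 * y)) / (1 - Real.exp (-(2 * y))))
      atTop (nhds 0) := by
    have h := (e2.const_mul 2).div (tendsto_const_nhds.sub e2) (show (1:ℝ) - 0 ≠ 0 by norm_num)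
    simp only [mul_zero, sub_zero, zero_div] at h
    exact h
  have hry : Tendsto (fun y : ℝ => 2 * Real.exp (-(2 * y)) / (1 - Real.exp (-(2 * y))) * y)
      atTop (nhds 0) := by
    have h := ((ye2.const_mul 2).mul ((tendsto_const_nhds.sub e2).inv₀ (show (1:ℝ) - 0 ≠ 0 by norm_num)))
    have h2 : Tendsto (fun y : ℝ => 2 * (y * Real.exp (-(2 * y))) *
        (1 - Real.exp (-(2 * y)))⁻¹) atTop (nhds 0) := by simpa using h
    apply h2.congr
    intro y
    ring
  have hc : Tendsto (fun y : ℝ => (Real.log (1 + Real.exp (-(2 * (x * y)))) - Real.log 2) / x)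
      atTop (nhds ((0 - Real.log 2) / x)) := (hlogterm.sub tendsto_const_nhds).div_const x
  have hrc := hr.mul hc
  rw [zero_mul] at hrc
  have key : Tendsto (fun y : ℝ =>
      (Real.log 2 - Real.log (1 + Real.exp (-(2 * (x * y))))) / x
      - 2 * Real.exp (-(2 * y)) / (1 - Real.exp (-(2 * y))) * y
      - 2 * Real.exp (-(2 * y)) / (1 - Real.exp (-(2 * y))) *
          ((Real.log (1 + Real.exp (-(2 * (x * y)))) - Real.log 2) / x))
      atTop (nhds (Real.log 2 / x)) := by
    have h := (hA.sub hry).sub hrc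
    simpa using h
  apply key.congr'
  filter_upwards [Filter.eventually_gt_atTop (0:ℝ)] with y hy
  have hu1 : Real.exp (-(2 * y)) < 1 := by
    rw [Real.exp_lt_one_iff]
    nlinarith
  have h1u : (1:ℝ) - Real.exp (-(2 * y)) ≠ 0 := by
    have := Real.exp_pos (-(2 * y)); nlinarith
  rw [aux_log_cosh (x * y), aux_cosh_exp y, aux_sinh_exp y]
  have hE : Real.exp y ≠ 0 := Real.exp_ne_zero y
  field_simp
  ring

theorem phi_eq_log2_sub_integral (x : ℝ) (hx : x ∈ Ioo (0:ℝ) 1) :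
    IntegrableOn (fun y => (Real.log (Real.cosh (x * y)) / x) * (1 / (Real.sinh y) ^ 2))
      (Ioi (0:ℝ)) ∧
    phi (π * x) =
      Real.log 2 / (π * x) -
        (1 / π) * ∫ y in Ioi (0:ℝ),
          (Real.log (Real.cosh (x * y)) / x) * (1 / (Real.sinh y) ^ 2) := by
  obtain ⟨hx0, hx1⟩ := hx
  have hxne : x ≠ 0 := ne_of_gt hx0
  -- notation
  have hderiv : ∀ y ∈ Ioi (0:ℝ),
      HasDerivAt (fun y => y - Real.cosh y / Real.sinh y * (Real.log (Real.cosh (x * y)) / x))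
        ((Real.log (Real.cosh (x * y)) / x) * (1 / (Real.sinh y) ^ 2) +
          Real.sinh ((1 - x) * y) / (Real.sinh y * Real.cosh (x * y))) y :=
    fun y hy => aux_hasDerivAt x hx0 hy
  have hFpos : ∀ y ∈ Ioi (0:ℝ),
      0 ≤ (Real.log (Real.cosh (x * y)) / x) * (1 / (Real.sinh y) ^ 2) := by
    intro y hy
    have h1 : 0 ≤ Real.log (Real.cosh (x * y)) := Real.log_nonneg (Real.one_le_cosh _)
    positivity
  have hgpos : ∀ y ∈ Ioi (0:ℝ),
      0 ≤ Real.sinh ((1 - x) * y) / (Real.sinh y * Real.cosh (x * y)) := by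
    intro y hy
    have h1 : 0 ≤ Real.sinh ((1 - x) * y) :=
      Real.sinh_nonneg_iff.mpr (mul_nonneg (by linarith) (le_of_lt hy))
    have h2 : 0 < Real.sinh y := Real.sinh_pos_iff.mpr hy
    have h3 : 0 < Real.cosh (x * y) := Real.cosh_pos _
    positivity
  have hpos : ∀ y ∈ Ioi (0:ℝ),
      0 ≤ (Real.log (Real.cosh (x * y)) / x) * (1 / (Real.sinh y) ^ 2) +
        Real.sinh ((1 - x) * y) / (Real.sinh y * Real.cosh (x * y)) :=
    fun y hy => add_nonneg (hFpos y hy) (hgpos y hy)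
  have hcont0 : ContinuousWithinAt
      (fun y => y - Real.cosh y / Real.sinh y * (Real.log (Real.cosh (x * y)) / x))
      (Ici (0:ℝ)) 0 := by
    rw [← continuousWithinAt_Ioi_iff_Ici]
    have hval0 : (fun y => y - Real.cosh y / Real.sinh y * (Real.log (Real.cosh (x * y)) / x))
        (0:ℝ) = 0 := by simp
    unfold ContinuousWithinAt
    rw [hval0]
    exact aux_tendsto_zero x hx0
  have htop := aux_tendsto_top x hx0
  have hint : IntegrableOn (fun y =>
      (Real.log (Real.cosh (x * y)) / x) * (1 / (Real.sinh y) ^ 2) +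
        Real.sinh ((1 - x) * y) / (Real.sinh y * Real.cosh (x * y))) (Ioi (0:ℝ)) :=
    integrableOn_Ioi_deriv_of_nonneg hcont0 hderiv hpos htop
  have hval : (∫ y in Ioi (0:ℝ),
      ((Real.log (Real.cosh (x * y)) / x) * (1 / (Real.sinh y) ^ 2) +
        Real.sinh ((1 - x) * y) / (Real.sinh y * Real.cosh (x * y)))) = Real.log 2 / x := by
    have h := integral_Ioi_of_hasDerivAt_of_nonneg hcont0 hderiv hpos htop
    simpa using h
  -- measurability of F
  have hFcont : ContinuousOn
      (fun y => (Real.log (Real.cosh (x * y)) / x) * (1 / (Real.sinh y) ^ 2)) (Ioi (0:ℝ)) := by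
    intro y hy
    have hs : Real.sinh y ≠ 0 := ne_of_gt (Real.sinh_pos_iff.mpr hy)
    apply ContinuousAt.continuousWithinAt
    have hcc : ContinuousAt (fun y : ℝ => Real.cosh (x * y)) y :=
      (Real.continuous_cosh.comp (continuous_const.mul continuous_id)).continuousAt
    have h1 : ContinuousAt (fun y : ℝ => Real.log (Real.cosh (x * y))) y :=
      hcc.log (ne_of_gt (Real.cosh_pos _))
    exact (h1.div_const x).mul
      (continuousAt_const.div ((Real.continuous_sinh.pow 2).continuousAt) (pow_ne_zero 2 hs))
  have hF : IntegrableOn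
      (fun y => (Real.log (Real.cosh (x * y)) / x) * (1 / (Real.sinh y) ^ 2)) (Ioi (0:ℝ)) := by
    apply MeasureTheory.Integrable.mono hint (hFcont.aestronglyMeasurable measurableSet_Ioi)
    rw [ae_restrict_iff' measurableSet_Ioi]
    filter_upwards with y hy
    rw [Real.norm_eq_abs, Real.norm_eq_abs, abs_of_nonneg (hFpos y hy),
      abs_of_nonneg (hpos y hy)]
    linarith [hgpos y hy]
  have hgInt : IntegrableOn
      (fun y => Real.sinh ((1 - x) * y) / (Real.sinh y * Real.cosh (x * y))) (Ioi (0:ℝ)) := by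
    refine (hint.sub hF).congr ?_
    filter_upwards with y
    simp only [Pi.sub_apply]
    ring
  have hsplit : (∫ y in Ioi (0:ℝ),
      ((Real.log (Real.cosh (x * y)) / x) * (1 / (Real.sinh y) ^ 2) +
        Real.sinh ((1 - x) * y) / (Real.sinh y * Real.cosh (x * y)))) =
      (∫ y in Ioi (0:ℝ), (Real.log (Real.cosh (x * y)) / x) * (1 / (Real.sinh y) ^ 2)) +
      (∫ y in Ioi (0:ℝ), Real.sinh ((1 - x) * y) / (Real.sinh y * Real.cosh (x * y))) :=
    integral_add hF hgInt
  have hphi : phi (π * x) = π⁻¹ *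
      ∫ y in Ioi (0:ℝ), Real.sinh ((1 - x) * y) / (Real.sinh y * Real.cosh (x * y)) := by
    rw [phi]
    have h1 : ∀ ξ : ℝ, Real.sinh ((π - π * x) * ξ) / (Real.sinh (π * ξ) * Real.cosh (π * x * ξ))
        = Real.sinh ((1 - x) * (π * ξ)) / (Real.sinh (π * ξ) * Real.cosh (x * (π * ξ))) := by
      intro ξ
      rw [show (π - π * x) * ξ = (1 - x) * (π * ξ) by ring,
        show π * x * ξ = x * (π * ξ) by ring]
    simp_rw [h1]
    rw [integral_comp_mul_left_Ioi
      (fun y => Real.sinh ((1 - x) * y) / (Real.sinh y * Real.cosh (x * y))) 0 Real.pi_pos]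
    simp [smul_eq_mul]
  refine ⟨hF, ?_⟩
  rw [hphi]
  have hgval : (∫ y in Ioi (0:ℝ),
      Real.sinh ((1 - x) * y) / (Real.sinh y * Real.cosh (x * y))) =
      Real.log 2 / x -
      ∫ y in Ioi (0:ℝ), (Real.log (Real.cosh (x * y)) / x) * (1 / (Real.sinh y) ^ 2) := by
    rw [hsplit] at hval
    linarith
  rw [hgval]
  have hπ : (π:ℝ) ≠ 0 := Real.pi_ne_zero
  field_simp
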